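/- Let λ be a partition of n, and u, t standard λ-tableaux such that (u,t) is favourable with restriction number i and D(t) ⊊ D(u). If i + 1 = max(SD(t)), then col_t(i+2) ≠ col_t(i). -/

import Mathlib

/-- Partial sum `λ₁ + ⋯ + λ_k` of a 1-indexed sequence of parts. -/
def psum (lam : ℕ → ℕ) (k : ℕ) : ℕ := ∑ i ∈ Finset.Icc 1 k, lam i

/-- `lam` is a composition of `n` (1-indexed parts, extended by zeros). -/
def IsComp (n : ℕ) (lam : ℕ → ℕ) : Prop :=
  lam 0 = 0 ∧ ∃ N, (∀ i, N < i → lam i = 0) ∧ psum lam N = n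

/-- `lam` is a partition of `n` (weakly decreasing parts). -/
def IsPartition (n : ℕ) (lam : ℕ → ℕ) : Prop :=
  IsComp n lam ∧ ∀ i j, 1 ≤ i → i ≤ j → lam j ≤ lam i

/-- Dominance order in the paper's (column) convention: `lam` dominates `mu`
(written `mu ≤ lam`) iff every partial sum of `lam` is at most the
corresponding partial sum of `mu`. -/
def Dominates (lam mu : ℕ → ℕ) : Prop := ∀ k, psum lam k ≤ psum mu k

/-- Row index of the box containing the entry `k`. -/
def rowT (p : ℕ → ℕ × ℕ) (k : ℕ) : ℕ := (p k).1
/-- Column index of the box containing the entry `k`. -/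
def colT (p : ℕ → ℕ × ℕ) (k : ℕ) : ℕ := (p k).2

/-- `p` is the position function of a bijective filling of the skew diagram
`[lam] ∖ [mu]` (1-indexed rows and columns, `lam j` boxes in column `j`)
by the entries `a+1, …, a+n`. -/
def IsSkewTab (lam mu : ℕ → ℕ) (a n : ℕ) (p : ℕ → ℕ × ℕ) : Prop :=
  (∀ k ∈ Finset.Icc (a+1) (a+n),
      1 ≤ (p k).2 ∧ mu (p k).2 < (p k).1 ∧ (p k).1 ≤ lam (p k).2) ∧
  (∀ k ∈ Finset.Icc (a+1) (a+n), ∀ l ∈ Finset.Icc (a+1) (a+n), p k = p l → k = l) ∧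
  (∀ c : ℕ × ℕ, 1 ≤ c.2 → mu c.2 < c.1 → c.1 ≤ lam c.2 →
      ∃ k ∈ Finset.Icc (a+1) (a+n), p k = c)

/-- A straight-shape `lam`-tableau with entries `1, …, n`. -/
def IsTab (lam : ℕ → ℕ) (n : ℕ) (p : ℕ → ℕ × ℕ) : Prop :=
  IsSkewTab lam (fun _ => 0) 0 n p

/-- Entries increase down each column. -/
def ColStd (a n : ℕ) (p : ℕ → ℕ × ℕ) : Prop :=
  ∀ k ∈ Finset.Icc (a+1) (a+n), ∀ l ∈ Finset.Icc (a+1) (a+n),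
    colT p k = colT p l → rowT p k < rowT p l → k < l

/-- Entries increase along each row. -/
def RowStd (a n : ℕ) (p : ℕ → ℕ × ℕ) : Prop :=
  ∀ k ∈ Finset.Icc (a+1) (a+n), ∀ l ∈ Finset.Icc (a+1) (a+n),
    rowT p k = rowT p l → colT p k < colT p l → k < l

/-- Standard skew tableau of shape `lam/mu` with entries `a+1, …, a+n`. -/
def IsStdSkew (lam mu : ℕ → ℕ) (a n : ℕ) (p : ℕ → ℕ × ℕ) : Prop :=
  IsSkewTab lam mu a n p ∧ ColStd a n p ∧ RowStd a n p

/-- Standard `lam`-tableau with entries `1, …, n`. -/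
def IsStd (lam : ℕ → ℕ) (n : ℕ) (p : ℕ → ℕ × ℕ) : Prop :=
  IsStdSkew lam (fun _ => 0) 0 n p

/-- Column standard straight-shape `lam`-tableau. -/
def IsColStdTab (lam : ℕ → ℕ) (n : ℕ) (p : ℕ → ℕ × ℕ) : Prop :=
  IsTab lam n p ∧ ColStd 0 n p

/-- `i ∈ D(p)`: a descent, `col(i) ≥ col(i+1)`. -/
def inD (a n : ℕ) (p : ℕ → ℕ × ℕ) (i : ℕ) : Prop :=
  a + 1 ≤ i ∧ i + 1 ≤ a + n ∧ colT p (i+1) ≤ colT p i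
/-- `i ∈ SD(p)`: a strong descent, `col(i) > col(i+1)`. -/
def inSD (a n : ℕ) (p : ℕ → ℕ × ℕ) (i : ℕ) : Prop :=
  a + 1 ≤ i ∧ i + 1 ≤ a + n ∧ colT p (i+1) < colT p i
/-- `i ∈ WD(p)`: a weak descent, `col(i) = col(i+1)`. -/
def inWD (a n : ℕ) (p : ℕ → ℕ × ℕ) (i : ℕ) : Prop :=
  a + 1 ≤ i ∧ i + 1 ≤ a + n ∧ colT p (i+1) = colT p i
/-- `i ∈ A(p)`: an ascent, `col(i) < col(i+1)`. -/
def inA (a n : ℕ) (p : ℕ → ℕ × ℕ) (i : ℕ) : Prop :=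
  a + 1 ≤ i ∧ i + 1 ≤ a + n ∧ colT p i < colT p (i+1)
/-- `i ∈ SA(p)`: a strong ascent, `row(i) > row(i+1)`. -/
def inSA (a n : ℕ) (p : ℕ → ℕ × ℕ) (i : ℕ) : Prop :=
  a + 1 ≤ i ∧ i + 1 ≤ a + n ∧ rowT p (i+1) < rowT p i

/-- Descent set of a tableau with entries `1, …, n`. -/
def Dset (n : ℕ) (p : ℕ → ℕ × ℕ) : Set ℕ := {i | inD 0 n p i}

/-- Shape of the restriction of `p` to entries `≤ m`: the number of boxes
of column `j` occupied by entries `≤ m`. -/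
def resShape (p : ℕ → ℕ × ℕ) (m j : ℕ) : ℕ :=
  ((Finset.Icc 1 m).filter (fun k => colT p k = j)).card

/-- Extended dominance order on standard tableaux with `n` boxes: `u ≤ t`. -/
def ExtDomLe (n : ℕ) (pu pt : ℕ → ℕ × ℕ) : Prop :=
  ∀ m ∈ Finset.Icc 1 n, Dominates (fun j => resShape pt m j) (fun j => resShape pu m j)

/-- `i` is the restriction number of `(u,t)`: the restrictions to entries `≤ i`
agree, and `i` is maximal with this property. -/
def RestNum (n : ℕ) (pu pt : ℕ → ℕ × ℕ) (i : ℕ) : Prop :=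
  i ≤ n ∧ (∀ k, 1 ≤ k → k ≤ i → pu k = pt k) ∧ (i = n ∨ pu (i+1) ≠ pt (i+1))

/-- `(u,t)` is favourable with restriction number `i`:
`i` lies in the symmetric difference `D(u) ⊕ D(t)`. -/
def Favourable (n : ℕ) (pu pt : ℕ → ℕ × ℕ) (i : ℕ) : Prop :=
  RestNum n pu pt i ∧
    ((inD 0 n pu i ∧ ¬ inD 0 n pt i) ∨ (inD 0 n pt i ∧ ¬ inD 0 n pu i))

/-- Dual Knuth move of the first kind of index `k` from `u` to `t`,
on standard tableaux of shape `lam`:  `t = s_k u` with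
`D(u) ∩ {k-1,k} = {k-1}` and `D(t) ∩ {k-1,k} = {k}`. -/
def DK1 (lam : ℕ → ℕ) (n : ℕ) (pu pt : ℕ → ℕ × ℕ) (k : ℕ) : Prop :=
  IsStd lam n pu ∧ IsStd lam n pt ∧ 2 ≤ k ∧
  (∀ m, pt m = pu (Equiv.swap k (k+1) m)) ∧
  inD 0 n pu (k-1) ∧ ¬ inD 0 n pu k ∧ inD 0 n pt k ∧ ¬ inD 0 n pt (k-1)

/-- Dual Knuth move of the second kind of index `k` from `u` to `t`:
`t = s_k u` with `D(u) ∩ {k,k+1} = {k+1}` and `D(t) ∩ {k,k+1} = {k}`. -/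
def DK2 (lam : ℕ → ℕ) (n : ℕ) (pu pt : ℕ → ℕ × ℕ) (k : ℕ) : Prop :=
  IsStd lam n pu ∧ IsStd lam n pt ∧ k + 2 ≤ n ∧
  (∀ m, pt m = pu (Equiv.swap k (k+1) m)) ∧
  inD 0 n pu (k+1) ∧ ¬ inD 0 n pu k ∧ inD 0 n pt k ∧ ¬ inD 0 n pt (k+1)

/-- A dual Knuth move (of either kind) of index `k` from `u` to `t`. -/
def DKMove (lam : ℕ → ℕ) (n : ℕ) (pu pt : ℕ → ℕ × ℕ) (k : ℕ) : Prop :=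
  DK1 lam n pu pt k ∨ DK2 lam n pu pt k

/-- A paired dual Knuth move: a dual Knuth move of the same kind and the same
index applied simultaneously to both components of a pair. -/
def PairedDKMove (mu lam : ℕ → ℕ) (n : ℕ)
    (a b : (ℕ → ℕ × ℕ) × (ℕ → ℕ × ℕ)) : Prop :=
  ∃ k, (DK1 mu n a.1 b.1 k ∧ DK1 lam n a.2 b.2 k) ∨
       (DK2 mu n a.1 b.1 k ∧ DK2 lam n a.2 b.2 k)

/-- Paired dual Knuth equivalence: the equivalence relation generated by
paired dual Knuth moves. -/
def PairedDKEquiv (mu lam : ℕ → ℕ) (n : ℕ)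
    (a b : (ℕ → ℕ × ℕ) × (ℕ → ℕ × ℕ)) : Prop :=
  Relation.ReflTransGen
    (fun x y => PairedDKMove mu lam n x y ∨ PairedDKMove mu lam n y x) a b

/-- Lexicographic order on same-shape column standard tableaux: `u <_lex t`. -/
def LexLT (n : ℕ) (pu pt : ℕ → ℕ × ℕ) : Prop :=
  ∃ l, 1 ≤ l ∧ l ≤ n ∧ colT pt l < colT pu l ∧
    ∀ m, l < m → m ≤ n → colT pt m = colT pu m

/-- `w` is a permutation of `[1,n]`, fixing all other natural numbers. -/
def IsPermOf (n : ℕ) (w : ℕ → ℕ) : Prop :=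
  (∀ k ∈ Finset.Icc 1 n, w k ∈ Finset.Icc 1 n) ∧
  (∀ k ∈ Finset.Icc 1 n, ∀ l ∈ Finset.Icc 1 n, w k = w l → k = l) ∧
  (∀ k, k ∉ Finset.Icc 1 n → w k = k)

/-- The Coxeter length of `w ∈ S_n`: the number of inversions. -/
def lenInv (n : ℕ) (w : ℕ → ℕ) : ℕ :=
  ((Finset.Icc 1 n ×ˢ Finset.Icc 1 n).filter
    (fun q => q.1 < q.2 ∧ w q.2 < w q.1)).card

/-- One step of the Bruhat order on `S_n`: `y = (i j) ∘ x` (so `y x⁻¹` is a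
reflection) with `l(x) < l(y)`. -/
def BruhatStep (n : ℕ) (x y : ℕ → ℕ) : Prop :=
  lenInv n x < lenInv n y ∧
  ∃ i j, 1 ≤ i ∧ i < j ∧ j ≤ n ∧ ∀ k, y k = Equiv.swap i j (x k)

/-- The Bruhat order on `S_n`. -/
def BruhatLe (n : ℕ) (x y : ℕ → ℕ) : Prop :=
  Relation.ReflTransGen (BruhatStep n) x y

/-- One step of the left weak order on `S_n`: `y = s_i ∘ x` with `l(x) < l(y)`. -/
def WeakStep (n : ℕ) (x y : ℕ → ℕ) : Prop :=
  lenInv n x < lenInv n y ∧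
  ∃ i, 1 ≤ i ∧ i + 1 ≤ n ∧ ∀ k, y k = Equiv.swap i (i+1) (x k)

/-- The left weak order on `S_n`. -/
def WeakLe (n : ℕ) (x y : ℕ → ℕ) : Prop :=
  Relation.ReflTransGen (WeakStep n) x y

/-- `ptau` is (the position function of) the column superstandard tableau
`τ_lam`: column standard, with the columns filled in order from left to right. -/
def IsSuperstandard (lam : ℕ → ℕ) (n : ℕ) (ptau : ℕ → ℕ × ℕ) : Prop :=
  IsTab lam n ptau ∧ ColStd 0 n ptau ∧
  ∀ k, 1 ≤ k → k + 1 ≤ n → colT ptau k ≤ colT ptau (k+1)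

/-- `w = perm(t)`, i.e. `w · τ_lam = t`: for each `k`, the box of `τ_lam`
containing `k` contains `w k` in `t`. -/
def IsPermTab (n : ℕ) (ptau pt : ℕ → ℕ × ℕ) (w : ℕ → ℕ) : Prop :=
  IsPermOf n w ∧ ∀ k ∈ Finset.Icc 1 n, pt (w k) = ptau k

/-- `p` (a standard skew tableau of shape `lam/mu` with entries `a+1, …, a+n`)
is the `(a+1)`-critical tableau: writing `m = a+1`, the entry `m` lies in the
first nonempty column `i` of the skew diagram, `m+1` lies in column `i+1`,
and the restriction to entries `> m+1` is minimal (no strong descents). -/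
def IsCritical (lam mu : ℕ → ℕ) (a n : ℕ) (p : ℕ → ℕ × ℕ) : Prop :=
  IsStdSkew lam mu a n p ∧
  (∀ j, 1 ≤ j → j < colT p (a+1) → lam j ≤ mu j) ∧
  mu (colT p (a+1)) < lam (colT p (a+1)) ∧
  colT p (a+2) = colT p (a+1) + 1 ∧
  ∀ i, a + 3 ≤ i → i + 1 ≤ a + n → colT p i ≤ colT p (i+1)

/-- The box `c` is removable from the diagram of `lam`. -/
def Removable (lam : ℕ → ℕ) (c : ℕ × ℕ) : Prop :=
  1 ≤ c.2 ∧ c.1 = lam c.2 ∧ lam (c.2 + 1) < c.1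

/-- One step of a jeu de taquin slide on a filling `p` with entries `1, …, n`:
the hole moves from `b` to `b'`, where `b'` is the box (below or to the right
of `b`) containing the smaller entry `x` among the occupied candidates, and the
filling is updated by moving `x` into `b`. -/
def SlideStep (n : ℕ) (p : ℕ → ℕ × ℕ) (b : ℕ × ℕ)
    (p' : ℕ → ℕ × ℕ) (b' : ℕ × ℕ) : Prop :=
  ∃ x, 1 ≤ x ∧ x ≤ n ∧ p x = b' ∧
    (b' = (b.1 + 1, b.2) ∨ b' = (b.1, b.2 + 1)) ∧
    (∀ y, 1 ≤ y → y ≤ n → (p y = (b.1 + 1, b.2) ∨ p y = (b.1, b.2 + 1)) → x ≤ y) ∧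
    (∀ y, p' y = if y = x then b else p y)

/-- `lam/mu` is a skew partition of `n`. -/
def IsSkewShape (n : ℕ) (lam mu : ℕ → ℕ) : Prop :=
  (∃ m, IsPartition (m + n) lam ∧ IsPartition m mu) ∧ ∀ j, mu j ≤ lam j

section Helpers

variable {lam : ℕ → ℕ} {n : ℕ} {p : ℕ → ℕ × ℕ}

lemma std_mem {k : ℕ} (h1 : 1 ≤ k) (h2 : k ≤ n) : k ∈ Finset.Icc (0+1) (0+n) :=
  Finset.mem_Icc.mpr ⟨by omega, by omega⟩

lemma std_box (h : IsStd lam n p) {k : ℕ} (h1 : 1 ≤ k) (h2 : k ≤ n) :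
    1 ≤ colT p k ∧ 1 ≤ rowT p k ∧ rowT p k ≤ lam (colT p k) := by
  have := h.1.1 k (std_mem h1 h2)
  exact ⟨this.1, this.2.1, this.2.2⟩

lemma std_inj (h : IsStd lam n p) {k l : ℕ} (hk1 : 1 ≤ k) (hk2 : k ≤ n)
    (hl1 : 1 ≤ l) (hl2 : l ≤ n) (he : p k = p l) : k = l :=
  h.1.2.1 k (std_mem hk1 hk2) l (std_mem hl1 hl2) he

lemma std_surj (h : IsStd lam n p) {r c : ℕ} (hc : 1 ≤ c) (hr : 1 ≤ r)
    (hrc : r ≤ lam c) : ∃ m, 1 ≤ m ∧ m ≤ n ∧ p m = (r, c) := by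
  obtain ⟨m, hm, hpm⟩ := h.1.2.2 (r, c) hc (by exact hr) hrc
  rw [Finset.mem_Icc] at hm
  exact ⟨m, by omega, by omega, hpm⟩

/-- In a standard tableau, entries in the same column increase downwards. -/
lemma std_row_lt (h : IsStd lam n p) {k l : ℕ} (hk1 : 1 ≤ k) (hk2 : k ≤ n)
    (hl1 : 1 ≤ l) (hl2 : l ≤ n) (hcol : colT p k = colT p l) (hkl : k < l) :
    rowT p k < rowT p l := by
  rcases lt_trichotomy (rowT p k) (rowT p l) with h' | h' | h'
  · exact h'
  · exfalso
    have he : p k = p l := Prod.ext h' hcol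
    have := std_inj h hk1 hk2 hl1 hl2 he
    omega
  · exfalso
    have := h.2.1 l (std_mem hl1 hl2) k (std_mem hk1 hk2) hcol.symm h'
    omega

/-- The box directly above an entry `k` (if it exists) holds a smaller entry. -/
lemma std_above (h : IsStd lam n p) {k : ℕ} (hk1 : 1 ≤ k) (hk2 : k ≤ n)
    (hr : 2 ≤ rowT p k) :
    ∃ m, 1 ≤ m ∧ m ≤ n ∧ p m = (rowT p k - 1, colT p k) ∧ m < k := by
  obtain ⟨hc, hrow, hlc⟩ := std_box h hk1 hk2
  obtain ⟨m, hm1, hm2, hpm⟩ :=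
    std_surj (r := rowT p k - 1) (c := colT p k) h hc (by omega) (by omega)
  refine ⟨m, hm1, hm2, hpm, ?_⟩
  have hcol : colT p m = colT p k := by
    show (p m).2 = _; rw [hpm]
  have hrow' : rowT p m = rowT p k - 1 := by
    show (p m).1 = _; rw [hpm]
  exact h.2.1 m (std_mem hm1 hm2) k (std_mem hk1 hk2) hcol (by omega)

end Helpers

/-- for a favourable pair with `D(t) ⊊ D(u)` and
`i + 1 = max(SD(t))`, the columns of `i+2` and `i` in `t` differ. -/
theorem col_ne_of_favourable_max (n : ℕ) (lam : ℕ → ℕ)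
    (hlam : IsPartition n lam)
    (pu pt : ℕ → ℕ × ℕ) (hu : IsStd lam n pu) (ht : IsStd lam n pt)
    (i : ℕ) (hfav : Favourable n pu pt i)
    (hD : Dset n pt ⊂ Dset n pu)
    (hmax : inSD 0 n pt (i+1) ∧ ∀ j, inSD 0 n pt j → j ≤ i + 1) :
    colT pt (i+2) ≠ colT pt i := by
  intro hcon
  set c := colT pt i with hcdef
  obtain ⟨hm1, hm2, hm3⟩ := hmax.1
  have hi2n : i + 2 ≤ n := by omega
  have hcc : c < colT pt (i+1) := by rw [← hcon]; exact hm3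
  have hDui : inD 0 n pu i := by
    rcases hfav.2 with ⟨h1, _⟩ | ⟨h1, _⟩
    · exact h1
    · exfalso
      have := h1.2.2
      omega
  obtain ⟨hi1, hin, hdu⟩ := hDui
  have hi1' : 1 ≤ i := by omega
  have hin' : i ≤ n := by omega
  have hagree : ∀ m, 1 ≤ m → m ≤ i → pu m = pt m := hfav.1.2.1
  have hpui : pu i = pt i := hagree i hi1' le_rfl
  set r := rowT pt i with hrdef
  have hpti : pt i = (r, c) := rfl
  obtain ⟨hc1, hr1, hrlam⟩ := std_box ht hi1' hin'
  -- columns of t are weakly increasing from entry i+2 on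
  have hmono : ∀ a b, i + 2 ≤ a → a ≤ b → b ≤ n → colT pt a ≤ colT pt b := by
    intro a b ha hab hbn
    induction b with
    | zero => omega
    | succ b ih =>
      rcases Nat.lt_or_ge b a with h' | h'
      · have hab' : a = b + 1 := by omega
        subst hab'
        exact le_rfl
      · have hb : colT pt a ≤ colT pt b := ih (by omega) (by omega)
        have hnsd : ¬ inSD 0 n pt b := fun hsd => by have := hmax.2 b hsd; omega
        have hbb : colT pt b ≤ colT pt (b+1) := by
          by_contra hlt
          exact hnsd ⟨by omega, by omega, by omega⟩
        omega
  -- entries of t in columns < c are at most i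
  have hsmall : ∀ m, 1 ≤ m → m ≤ n → colT pt m < c → m ≤ i := by
    intro m hm1 hmn hcol
    by_contra h'
    push_neg at h'
    have hcase : m = i + 1 ∨ i + 2 ≤ m := by omega
    rcases hcase with h | h
    · subst h; omega
    · have := hmono (i+2) m le_rfl h hmn
      omega
  have hsub : ∀ j, inD 0 n pt j → inD 0 n pu j := fun j hj => hD.1 hj
  -- the placement lemma for u
  have place : ∀ M, i + 1 ≤ M → M ≤ n → colT pu M ≤ c →
      (∀ e, 1 ≤ e → i + e < M → pu (i+e) = (r+e, c)) →
      pu M = (r + (M - i), c) := by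
    intro M hM1 hMn hMcol hprev
    obtain ⟨hcu1, hru1, hrulam⟩ := std_box hu (by omega) hMn
    have hpuM : pu M = (rowT pu M, colT pu M) := rfl
    rcases Nat.lt_or_ge (colT pu M) c with hlt | hge
    · -- column < c : that box of t holds an entry ≤ i, clash
      obtain ⟨m, hm1, hmn, hpm⟩ := std_surj ht hcu1 hru1 hrulam
      have hmi : m ≤ i := hsmall m hm1 hmn (by show (pt m).2 < c; rw [hpm]; exact hlt)
      have heq : pu m = pu M := by rw [hagree m hm1 hmi, hpm, hpuM]
      have := std_inj hu hm1 hmn (by omega) hMn heq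
      omega
    · have hcu_eq : colT pu M = c := le_antisymm hMcol hge
      rcases Nat.lt_or_ge r (rowT pu M) with hgt | hle
      · rcases lt_trichotomy (rowT pu M) (r + (M - i)) with h1 | h1 | h1
        · -- r < row < r + (M-i): clash with a previous entry of u
          have he : pu (i + (rowT pu M - r)) = (r + (rowT pu M - r), c) :=
            hprev (rowT pu M - r) (by omega) (by omega)
          have heq : pu (i + (rowT pu M - r)) = pu M := by
            rw [he, hpuM, hcu_eq]
            have h2 : r + (rowT pu M - r) = rowT pu M := by omega
            rw [h2]
          have := std_inj hu (by omega) (by omega) (by omega) hMn heq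
          omega
        · rw [hpuM, h1, hcu_eq]
        · -- row > r + (M-i): the box above would hold an impossible entry
          obtain ⟨m, hm1, hmn, hpm, hmM⟩ :=
            std_above hu (by omega) hMn (by omega : 2 ≤ rowT pu M)
          have hmgti : i < m := by
            by_contra h'
            push_neg at h'
            have hptm : pt m = (rowT pu M - 1, colT pu M) := by
              rw [← hagree m hm1 h', hpm]
            have hcolm : colT pt m = colT pt i := by
              show (pt m).2 = c; rw [hptm, hcu_eq]
            have hrowm : rowT pt m = rowT pu M - 1 := by
              show (pt m).1 = _; rw [hptm]
            rcases Nat.eq_or_lt_of_le h' with h'' | h''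
            · rw [h''] at hrowm; omega
            · have := std_row_lt ht hm1 hmn hi1' hin' hcolm h''
              omega
          have he : pu (i + (m - i)) = (r + (m - i), c) :=
            hprev (m - i) (by omega) (by omega)
          have h2 : i + (m - i) = m := by omega
          rw [h2] at he
          have h3 := he.symm.trans hpm
          have h4 : r + (m - i) = rowT pu M - 1 := congrArg Prod.fst h3
          omega
      · -- row ≤ r : that box of t holds an entry ≤ i, clash
        obtain ⟨m, hm1, hmn, hpm⟩ := std_surj ht hc1 hru1
          (by have h5 := hrulam; rw [hcu_eq] at h5; exact h5)
        have hmi : m ≤ i := by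
          by_contra h'
          push_neg at h'
          have hcolm : colT pt i = colT pt m := by
            show c = (pt m).2; rw [hpm]
          have hrowm : rowT pt m = rowT pu M := by
            show (pt m).1 = _; rw [hpm]
          have := std_row_lt ht hi1' hin' hm1 hmn hcolm h'
          omega
        have heq : pu m = pu M := by rw [hagree m hm1 hmi, hpm, hpuM, hcu_eq]
        have := std_inj hu hm1 hmn (by omega) hMn heq
        omega
  -- entry i+2 of t sits at (r+1, c)
  have hpt2 : pt (i+2) = (r + 1, c) := by
    have hcol2 : colT pt (i+2) = c := hcon
    have hrgt : r < rowT pt (i+2) :=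
      std_row_lt ht hi1' hin' (by omega) hi2n hcol2.symm (by omega)
    have hrow2 : rowT pt (i+2) = r + 1 := by
      by_contra h'
      obtain ⟨m, hm1, hmn, hpm, hmlt⟩ :=
        std_above ht (by omega) hi2n (by omega : 2 ≤ rowT pt (i+2))
      have hcolm : colT pt m = colT pt i := by
        show (pt m).2 = c; rw [hpm, hcol2]
      have hrowm : rowT pt m = rowT pt (i+2) - 1 := by
        show (pt m).1 = _; rw [hpm]
      have hm_ne : m ≠ i + 1 := by
        intro h''
        rw [h''] at hcolm
        omega
      have hmi : m ≤ i := by omega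
      rcases Nat.eq_or_lt_of_le hmi with h'' | h''
      · rw [h''] at hrowm; omega
      · have := std_row_lt ht hm1 hmn hi1' hin' hcolm h''
        omega
    calc pt (i+2) = (rowT pt (i+2), colT pt (i+2)) := rfl
    _ = (r+1, c) := by rw [hrow2, hcol2]
  have hD0 : r + 1 ≤ lam c := by
    obtain ⟨_, _, hb⟩ := std_box ht (by omega : 1 ≤ i+2) hi2n
    have h1 : rowT pt (i+2) = r + 1 := by show (pt (i+2)).1 = _; rw [hpt2]
    have h2 : colT pt (i+2) = c := hcon
    rw [h1, h2] at hb
    exact hb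
  -- placement of entries i+1+d in t, down column c
  have tplace : ∀ d, 1 ≤ d → d ≤ lam c - r → pt (i+1+d) = (r+d, c) ∧ i+1+d ≤ n := by
    intro d
    induction d with
    | zero => omega
    | succ d ih =>
      intro _ hdle
      by_cases hd0 : d = 0
      · subst hd0
        constructor
        · show pt (i+2) = (r+1, c); exact hpt2
        · show i + 2 ≤ n; exact hi2n
      · have hd1 : 1 ≤ d := by omega
        obtain ⟨hptd, hdn⟩ := ih hd1 (by omega)
        obtain ⟨m, hm1, hmn, hpm⟩ := std_surj ht hc1 (by omega : 1 ≤ r + d + 1)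
          (by omega : r + d + 1 ≤ lam c)
        have hcolm : colT pt (i+1+d) = colT pt m := by
          show (pt (i+1+d)).2 = (pt m).2; rw [hptd, hpm]
        have hrowd : rowT pt (i+1+d) = r + d := by
          show (pt (i+1+d)).1 = _; rw [hptd]
        have hrowm : rowT pt m = r + d + 1 := by
          show (pt m).1 = _; rw [hpm]
        have hlt : i+1+d < m := by
          by_contra h'
          push_neg at h'
          rcases Nat.eq_or_lt_of_le h' with h'' | h''
          · rw [h''] at hrowm; omega
          · have := std_row_lt ht hm1 hmn (by omega) hdn hcolm.symm h''
            omega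
        have hmeq : m = i+2+d := by
          by_contra h'
          have h2 : i+2+d < m := by omega
          have hn2 : i+2+d ≤ n := by omega
          have hcol1 : colT pt (i+1+d) ≤ colT pt (i+2+d) :=
            hmono (i+1+d) (i+2+d) (by omega) (by omega) hn2
          have hcol2' : colT pt (i+2+d) ≤ colT pt m :=
            hmono (i+2+d) m (by omega) (by omega) hmn
          have hcd : colT pt (i+1+d) = c := by show (pt (i+1+d)).2 = c; rw [hptd]
          have hcm : colT pt m = c := by show (pt m).2 = c; rw [hpm]
          have hceq : colT pt (i+2+d) = colT pt m := by omega
          have hceq' : colT pt (i+1+d) = colT pt (i+2+d) := by omega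
          have hA := std_row_lt ht (by omega) hn2 hm1 hmn hceq h2
          have hB := std_row_lt ht (by omega) hdn (by omega) hn2 hceq' (by omega)
          omega
        subst hmeq
        have h3 : i + 1 + (d + 1) = i + 2 + d := by omega
        rw [h3]
        exact ⟨hpm, hmn⟩
  -- placement of entries i+e in u, down column c
  have uplace : ∀ d, d ≤ lam c - r → ∀ e, 1 ≤ e → e ≤ d → pu (i+e) = (r+e, c) := by
    intro d
    induction d with
    | zero => intro _ e he1 he2; omega
    | succ d ih =>
      intro hdle e he1 he2
      rcases Nat.lt_or_ge e (d+1) with h' | h'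
      · exact ih (by omega) e he1 (by omega)
      · have hed : e = d + 1 := by omega
        subst hed
        by_cases hd0 : d = 0
        · subst hd0
          have hci : colT pu i = c := by show (pu i).2 = c; rw [hpui, hpti]
          have hcolu : colT pu (i+1) ≤ c := by omega
          have hres := place (i+1) le_rfl (by omega) hcolu
            (by intro e' h1 h2; exfalso; omega)
          have h1 : i + 1 - i = 1 := by omega
          rw [h1] at hres
          exact hres
        · have hd1 : 1 ≤ d := by omega
          have hprev : pu (i+d) = (r+d, c) := ih (by omega) d hd1 le_rfl
          obtain ⟨hpt_d, hnd⟩ := tplace d hd1 (by omega)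
          have hcol_d1 : colT pt (i+d+1) = c := by
            show (pt (i+d+1)).2 = c
            have h2 : i + d + 1 = i + 1 + d := by omega
            rw [h2, hpt_d]
          have hcol_d : c ≤ colT pt (i+d) := by
            by_cases h1 : d = 1
            · subst h1; omega
            · obtain ⟨hp, _⟩ := tplace (d-1) (by omega) (by omega)
              have h2 : i + d = i + 1 + (d-1) := by omega
              rw [h2]
              have h3 : colT pt (i+1+(d-1)) = c := by
                show (pt (i+1+(d-1))).2 = c; rw [hp]
              omega
          have hDt : inD 0 n pt (i+d) := ⟨by omega, by omega, by omega⟩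
          have hDu := hsub _ hDt
          have hcolu : colT pu (i+d+1) ≤ c := by
            have h3 := hDu.2.2
            have h4 : colT pu (i+d) = c := by show (pu (i+d)).2 = c; rw [hprev]
            omega
          have hres := place (i+d+1) (by omega) (by omega) hcolu
            (by
              intro e' he1' he2'
              exact ih (by omega) e' he1' (by omega))
          have h1 : i + d + 1 - i = d + 1 := by omega
          rw [h1] at hres
          exact hres
  -- the final contradiction: column c overflows in u
  have hD01 : 1 ≤ lam c - r := by omega
  obtain ⟨hptM, hMn⟩ := tplace (lam c - r) hD01 le_rfl
  have hpuD0 : pu (i + (lam c - r)) = (r + (lam c - r), c) :=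
    uplace (lam c - r) le_rfl (lam c - r) hD01 le_rfl
  have hcolM : colT pt (i + (lam c - r) + 1) = c := by
    show (pt (i + (lam c - r) + 1)).2 = c
    have h2 : i + (lam c - r) + 1 = i + 1 + (lam c - r) := by omega
    rw [h2, hptM]
  have hcolD0 : c ≤ colT pt (i + (lam c - r)) := by
    by_cases h1 : lam c - r = 1
    · rw [show i + (lam c - r) = i + 1 by omega]; omega
    · obtain ⟨hp, _⟩ := tplace (lam c - r - 1) (by omega) (by omega)
      rw [show i + (lam c - r) = i + 1 + (lam c - r - 1) by omega]
      have h3 : colT pt (i+1+(lam c - r - 1)) = c := by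
        show (pt (i+1+(lam c - r - 1))).2 = c; rw [hp]
      omega
  have hDt : inD 0 n pt (i + (lam c - r)) := ⟨by omega, by omega, by omega⟩
  have hDu := hsub _ hDt
  have hcolu : colT pu (i + (lam c - r) + 1) ≤ c := by
    have h3 := hDu.2.2
    have h4 : colT pu (i + (lam c - r)) = c := by
      show (pu (i + (lam c - r))).2 = c; rw [hpuD0]
    omega
  have hres := place (i + (lam c - r) + 1) (by omega) (by omega) hcolu
    (by
      intro e he1 he2
      exact uplace (lam c - r) le_rfl e he1 (by omega))
  have h1 : i + (lam c - r) + 1 - i = (lam c - r) + 1 := by omega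
  rw [h1] at hres
  obtain ⟨_, _, hb⟩ := std_box hu (by omega : 1 ≤ i + (lam c - r) + 1) (by omega)
  have hrow : rowT pu (i + (lam c - r) + 1) = r + ((lam c - r) + 1) := by
    show (pu (i + (lam c - r) + 1)).1 = _; rw [hres]
  have hcolr : colT pu (i + (lam c - r) + 1) = c := by
    show (pu (i + (lam c - r) + 1)).2 = _; rw [hres]
  rw [hrow, hcolr] at hb
  omega
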